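/- Let G act linearly and isometrically on a Hilbert space M, and let X be a random variable with E‖X‖² < ∞ and E(X) = t₀ ≠ 0. If P(sup_{g∈G} ⟨g·X, t₀⟩ > ⟨X, t₀⟩) > 0, then there exists a real number a⋆ > 1 such that F(a⋆ t₀) < F(t₀), where F(m) = E(inf_{g∈G} ‖g·X − m‖²). In particular the orbit [t₀] is not a Fréchet mean of [X] in the quotient space M/G. -/

import Mathlib

open MeasureTheory

private lemma iInf_const_sub_mul {G : Type*} [Nonempty G] (f : G → ℝ)
    (hb : BddAbove (Set.range f)) (c k : ℝ) (hk : 0 < k) :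
    ⨅ g, (c - k * f g) = c - k * ⨆ g, f g := by
  obtain ⟨B, hB⟩ := hb
  have hbelow : BddBelow (Set.range fun g => c - k * f g) := by
    refine ⟨c - k * B, ?_⟩
    rintro _ ⟨g, rfl⟩
    have : f g ≤ B := hB ⟨g, rfl⟩
    dsimp only
    nlinarith [mul_le_mul_of_nonneg_left this hk.le]
  refine le_antisymm ?_ ?_
  · have h1 : ∀ g, f g ≤ (c - ⨅ g, (c - k * f g)) / k := by
      intro g
      have hle : (⨅ g, (c - k * f g)) ≤ c - k * f g := ciInf_le hbelow g
      rw [le_div_iff₀ hk]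
      nlinarith
    have h2 : (⨆ g, f g) ≤ (c - ⨅ g, (c - k * f g)) / k := ciSup_le h1
    rw [le_div_iff₀ hk] at h2
    nlinarith
  · refine le_ciInf fun g => ?_
    have : f g ≤ ⨆ g, f g := le_ciSup ⟨B, hB⟩ g
    nlinarith

/-- General inconsistency theorem: if `P(sup_g ⟨g•X,t₀⟩ > ⟨X,t₀⟩) > 0`, then
there exists `a⋆ > 1` with `F(a⋆ t₀) < F(t₀)`; in particular `[t₀]` is not a
Fréchet mean of `[X]` in the quotient space. -/
theorem stmt4 {M G Ω : Type*} [NormedAddCommGroup M] [InnerProductSpace ℝ M]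
    [CompleteSpace M] [Group G] [MulAction G M] [MeasurableSpace Ω]
    (μ : Measure Ω) [IsProbabilityMeasure μ]
    (hlin : ∀ g : G, IsLinearMap ℝ fun x : M => g • x)
    (hiso : ∀ (g : G) (x : M), ‖g • x‖ = ‖x‖)
    (X : Ω → M) (t₀ : M) (ht₀ : t₀ ≠ 0)
    (hX2 : Integrable (fun ω => ‖X ω‖ ^ 2) μ)
    (hXint : Integrable X μ)
    (hXmean : ∫ ω, X ω ∂μ = t₀)
    (hbdd : ∀ ω, BddAbove (Set.range fun g : G => (inner ℝ (g • X ω) t₀ : ℝ)))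
    (hsup : Integrable (fun ω => ⨆ g : G, (inner ℝ (g • X ω) t₀ : ℝ)) μ)
    (hP : 0 < μ {ω | (inner ℝ (X ω) t₀ : ℝ) < ⨆ g : G, (inner ℝ (g • X ω) t₀ : ℝ)}) :
    (∃ a : ℝ, 1 < a ∧
      (∫ ω, ⨅ g : G, ‖g • X ω - a • t₀‖ ^ 2 ∂μ)
        < ∫ ω, ⨅ g : G, ‖g • X ω - t₀‖ ^ 2 ∂μ) ∧
    ¬ (∀ m : M, (∫ ω, ⨅ g : G, ‖g • X ω - t₀‖ ^ 2 ∂μ)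
        ≤ ∫ ω, ⨅ g : G, ‖g • X ω - m‖ ^ 2 ∂μ) := by
  classical
  set T : ℝ := ‖t₀‖ ^ 2 with hT
  have hTpos : 0 < T := pow_pos (norm_pos_iff.mpr ht₀) 2
  set s : Ω → ℝ := fun ω => ⨆ g : G, (inner ℝ (g • X ω) t₀ : ℝ) with hs
  set S : ℝ := ∫ ω, s ω ∂μ with hS
  -- pointwise expansion of the squared norm
  have hexp : ∀ (g : G) (ω : Ω) (a : ℝ),
      ‖g • X ω - a • t₀‖ ^ 2
        = ‖X ω‖ ^ 2 + a ^ 2 * T - 2 * a * (inner ℝ (g • X ω) t₀ : ℝ) := by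
    intro g ω a
    have h1 : ‖g • X ω - a • t₀‖ ^ 2
        = ‖g • X ω‖ ^ 2 - 2 * (inner ℝ (g • X ω) (a • t₀) : ℝ) + ‖a • t₀‖ ^ 2 :=
      norm_sub_sq_real _ _
    have h2 : (inner ℝ (g • X ω) (a • t₀) : ℝ) = a * inner ℝ (g • X ω) t₀ :=
      real_inner_smul_right _ _ _
    have h3 : ‖a • t₀‖ ^ 2 = a ^ 2 * T := by
      rw [norm_smul, mul_pow, hT]; simp [sq_abs]
    rw [h1, h2, h3, hiso]; ring
  -- pointwise infimum formula
  have hinff : ∀ (ω : Ω) (a : ℝ), 0 < a →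
      (⨅ g : G, ‖g • X ω - a • t₀‖ ^ 2)
        = ‖X ω‖ ^ 2 + a ^ 2 * T - 2 * a * s ω := by
    intro ω a ha
    have : (fun g : G => ‖g • X ω - a • t₀‖ ^ 2)
        = fun g : G => (‖X ω‖ ^ 2 + a ^ 2 * T) - (2 * a) * (inner ℝ (g • X ω) t₀ : ℝ) := by
      funext g; rw [hexp]
    rw [this]
    exact iInf_const_sub_mul _ (hbdd ω) _ _ (by positivity)
  -- integral formula
  have hFint : ∀ a : ℝ, 0 < a →
      (∫ ω, ⨅ g : G, ‖g • X ω - a • t₀‖ ^ 2 ∂μ)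
        = (∫ ω, ‖X ω‖ ^ 2 ∂μ) + a ^ 2 * T - 2 * a * S := by
    intro a ha
    have h1 : (fun ω => ⨅ g : G, ‖g • X ω - a • t₀‖ ^ 2)
        = fun ω => (‖X ω‖ ^ 2 + a ^ 2 * T) - 2 * a * s ω := by
      funext ω; rw [hinff ω a ha]
    have hc : Integrable (fun _ : Ω => a ^ 2 * T) μ := integrable_const _
    have hint1 : Integrable (fun ω => ‖X ω‖ ^ 2 + a ^ 2 * T) μ := hX2.add hc
    have hint2 : Integrable (fun ω => 2 * a * s ω) μ := hsup.const_mul _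
    have h3 : (∫ ω, 2 * a * s ω ∂μ) = 2 * a * S := by
      simpa [smul_eq_mul, hS] using integral_smul (2 * a) s (μ := μ)
    rw [h1, integral_sub hint1 hint2, integral_add hX2 hc, h3, integral_const]
    simp
  -- S > T
  have hle : ∀ ω, (inner ℝ (X ω) t₀ : ℝ) ≤ s ω := by
    intro ω
    have := le_ciSup (hbdd ω) (1 : G)
    simpa using this
  have hinner_int : Integrable (fun ω => (inner ℝ (X ω) t₀ : ℝ)) μ :=
    hXint.inner_const t₀
  have hintinner : (∫ ω, (inner ℝ (X ω) t₀ : ℝ) ∂μ) = T := by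
    have : (∫ ω, (inner ℝ t₀ (X ω) : ℝ) ∂μ) = inner ℝ t₀ (∫ ω, X ω ∂μ) :=
      integral_inner hXint t₀
    rw [hXmean] at this
    calc (∫ ω, (inner ℝ (X ω) t₀ : ℝ) ∂μ) = ∫ ω, (inner ℝ t₀ (X ω) : ℝ) ∂μ := by
          simp_rw [real_inner_comm]
      _ = inner ℝ t₀ t₀ := this
      _ = T := real_inner_self_eq_norm_sq t₀
  have hST : T < S := by
    set h : Ω → ℝ := fun ω => s ω - (inner ℝ (X ω) t₀ : ℝ) with hh
    have hhint : Integrable h μ := hsup.sub hinner_int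
    have hhnn : 0 ≤ h := fun ω => by simpa [hh] using sub_nonneg.mpr (hle ω)
    have hsubset : {ω | (inner ℝ (X ω) t₀ : ℝ) < s ω} ⊆ Function.support h := by
      intro ω hω
      simp only [Function.mem_support, hh]
      exact ne_of_gt (sub_pos.mpr hω)
    have hpos : 0 < ∫ ω, h ω ∂μ := by
      rw [integral_pos_iff_support_of_nonneg hhnn hhint]
      exact lt_of_lt_of_le hP (measure_mono hsubset)
    have : (∫ ω, h ω ∂μ) = S - T := by
      rw [hh]
      rw [integral_sub hsup hinner_int, hintinner]
    linarith [this ▸ hpos]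
  -- choose a = S / T
  set a : ℝ := S / T with haa
  have ha1 : 1 < a := (one_lt_div hTpos).mpr hST
  have hSa : S = a * T := by rw [haa, div_mul_cancel₀ _ hTpos.ne']
  have hmain : (∫ ω, ⨅ g : G, ‖g • X ω - a • t₀‖ ^ 2 ∂μ)
      < ∫ ω, ⨅ g : G, ‖g • X ω - t₀‖ ^ 2 ∂μ := by
    have h1 := hFint a (by linarith)
    have h0 := hFint 1 one_pos
    rw [one_smul] at h0
    rw [h1, h0]
    nlinarith [sq_nonneg (a - 1)]
  refine ⟨⟨a, ha1, hmain⟩, fun hmin => ?_⟩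
  exact absurd (hmin (a • t₀)) (not_le.mpr hmain)
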